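/- Let A, B, X be bounded linear operators on a complex Hilbert space H with A and B self-adjoint, let m > 0 be a real number, and suppose X − mI is a positive operator (i.e., X ≥ mI > 0). Then m‖A − B‖ ≤ w(AX − XB) ≤ ‖AX − XB‖, where w denotes the numerical radius. -/

import Mathlib

/-- The numerical radius of a bounded linear operator. -/
noncomputable def numRadius {E : Type*} [NormedAddCommGroup E] [InnerProductSpace ℂ E]
    (T : E →L[ℂ] E) : ℝ :=
  ⨆ x : {x : E // ‖x‖ = 1}, ‖(inner ℂ (T x.val) x.val : ℂ)‖

section Helpers
set_option linter.unusedSectionVars false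

open RCLike ContinuousLinearMap

variable {H : Type*} [NormedAddCommGroup H] [InnerProductSpace ℂ H] [CompleteSpace H]

local notation "⟪" x ", " y "⟫" => @inner ℂ _ _ x y

lemma my_sym {D : H →L[ℂ] H} (hD : IsSelfAdjoint D) (x y : H) : ⟪D x, y⟫ = ⟪x, D y⟫ :=
  (ContinuousLinearMap.isSelfAdjoint_iff_isSymmetric.mp hD) x y

lemma my_real {D : H →L[ℂ] H} (hD : IsSelfAdjoint D) (x : H) :
    ⟪D x, x⟫ = ((⟪D x, x⟫.re : ℝ) : ℂ) := by
  have h : (starRingEnd ℂ) ⟪D x, x⟫ = ⟪D x, x⟫ := by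
    rw [inner_conj_symm, my_sym hD]
  rw [Complex.conj_eq_iff_re] at h
  exact h.symm

/-- Polarization bound: if the quadratic form of a self-adjoint non-zero operator
is bounded by `M` on the unit sphere, then `‖D‖ ≤ M`. -/
lemma my_norm_le {D : H →L[ℂ] H} (hD : IsSelfAdjoint D) {x₀ : H} (hx₀ : D x₀ ≠ 0) {M : ℝ}
    (h : ∀ x : H, ‖x‖ = 1 → |(⟪D x, x⟫).re| ≤ M) : ‖D‖ ≤ M := by
  -- quadratic bound for all x
  have hq : ∀ x : H, |(⟪D x, x⟫).re| ≤ M * ‖x‖ ^ 2 := by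
    intro x
    rcases eq_or_ne x 0 with rfl | hx
    · simp
    · have hnx : (0 : ℝ) < ‖x‖ := norm_pos_iff.mpr hx
      have hu : ‖(‖x‖⁻¹ : ℂ) • x‖ = 1 := by
        simp [norm_smul, inv_mul_cancel₀ hnx.ne']
      have := h _ hu
      have hinner : ⟪D ((‖x‖⁻¹ : ℂ) • x), (‖x‖⁻¹ : ℂ) • x⟫
          = ((‖x‖⁻¹ ^ 2 : ℝ) : ℂ) * ⟪D x, x⟫ := by
        rw [map_smul, inner_smul_left, inner_smul_right, map_inv₀, Complex.conj_ofReal]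
        push_cast
        ring
      rw [hinner, Complex.re_ofReal_mul, abs_mul, abs_pow, abs_inv, abs_norm] at this
      calc |(⟪D x, x⟫).re| = ‖x‖^2 * (‖x‖⁻¹^2 * |(⟪D x, x⟫).re|) := by field_simp
        _ ≤ ‖x‖^2 * M := mul_le_mul_of_nonneg_left this (by positivity)
        _ = M * ‖x‖^2 := by ring
  have hM : 0 ≤ M := by
    have hx0 : x₀ ≠ 0 := by intro hc; apply hx₀; rw [hc]; simp
    have h2 : (0:ℝ) < ‖x₀‖^2 := pow_pos (norm_pos_iff.mpr hx0) 2
    nlinarith [hq x₀, abs_nonneg (⟪D x₀, x₀⟫).re]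
  -- bilinear bound via polarization
  have hb : ∀ x y : H, |(⟪D x, y⟫).re| ≤ M * (‖x‖^2 + ‖y‖^2) / 2 := by
    intro x y
    have hpol : (⟪D (x+y), x+y⟫).re - (⟪D (x-y), x-y⟫).re = 4 * (⟪D x, y⟫).re := by
      have e1 : ⟪D (x+y), x+y⟫ = ⟪D x, x⟫ + ⟪D x, y⟫ + ⟪D y, x⟫ + ⟪D y, y⟫ := by
        rw [map_add, inner_add_left, inner_add_right, inner_add_right]; ring
      have e2 : ⟪D (x-y), x-y⟫ = ⟪D x, x⟫ - ⟪D x, y⟫ - ⟪D y, x⟫ + ⟪D y, y⟫ := by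
        rw [map_sub, inner_sub_left, inner_sub_right, inner_sub_right]; ring
      have e3 : (⟪D y, x⟫).re = (⟪D x, y⟫).re := by
        rw [my_sym hD y x, ← inner_conj_symm]
        exact Complex.conj_re _
      rw [e1, e2]
      simp only [Complex.add_re, Complex.sub_re]
      linarith [e3]
    have h1 := hq (x + y)
    have h2 := hq (x - y)
    have hn : ‖x + y‖ ^ 2 + ‖x - y‖ ^ 2 = 2 * (‖x‖^2 + ‖y‖^2) := by
      have ha := @norm_add_sq ℂ _ _ _ _ x y
      have hs := @norm_sub_sq ℂ _ _ _ _ x y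
      simp only [RCLike.re_to_complex] at ha hs
      linarith
    rw [abs_le] at h1 h2 ⊢
    constructor <;> nlinarith [h1.1, h1.2, h2.1, h2.2, sq_nonneg ‖x+y‖, sq_nonneg ‖x-y‖,
      mul_nonneg hM (sq_nonneg ‖x+y‖), mul_nonneg hM (sq_nonneg ‖x-y‖)]
  -- pointwise norm bound
  refine D.opNorm_le_bound hM (fun x => ?_)
  rcases eq_or_ne (D x) 0 with h0 | h0
  · rw [h0, norm_zero]; positivity
  · have hDx : (0:ℝ) < ‖D x‖ := norm_pos_iff.mpr h0
    have hbd := hb x ((((‖x‖ / ‖D x‖) : ℝ) : ℂ) • D x)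
    have hre : (⟪D x, (((‖x‖ / ‖D x‖) : ℝ) : ℂ) • D x⟫).re = ‖x‖ * ‖D x‖ := by
      have hself : ‖D x‖ ^ 2 = (⟪D x, D x⟫).re := by
        simpa using InnerProductSpace.norm_sq_eq_re_inner (𝕜 := ℂ) (D x)
      rw [inner_smul_right, Complex.re_ofReal_mul, ← hself]
      field_simp
    have hny : ‖(((‖x‖ / ‖D x‖) : ℝ) : ℂ) • D x‖ = ‖x‖ := by
      rw [norm_smul]
      simp [abs_of_nonneg (div_nonneg (norm_nonneg x) (norm_nonneg (D x)))]
      field_simp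
    rw [hre, hny] at hbd
    have h5 := le_trans (le_abs_self _) hbd
    rcases eq_or_ne x 0 with rfl | hx
    · simp at h0
    · have hnx : (0:ℝ) < ‖x‖ := norm_pos_iff.mpr hx
      nlinarith

lemma my_exists_unit {D : H →L[ℂ] H} (hD : IsSelfAdjoint D) (hD0 : D ≠ 0) {ε : ℝ} (hε : 0 < ε) :
    ∃ x : H, ‖x‖ = 1 ∧ ‖D‖ - ε ≤ |(⟪D x, x⟫).re| := by
  by_contra hc
  push_neg at hc
  obtain ⟨x₀, hx₀⟩ : ∃ x, D x ≠ 0 := by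
    by_contra h'
    push_neg at h'
    exact hD0 (ContinuousLinearMap.ext fun x => by simp [h' x])
  have := my_norm_le hD hx₀ (M := ‖D‖ - ε) (fun x hx => (hc x hx).le)
  linarith


lemma my_inner_le (T : H →L[ℂ] H) (x : H) (hx : ‖x‖ = 1) : ‖(⟪T x, x⟫ : ℂ)‖ ≤ ‖T‖ := by
  calc ‖(⟪T x, x⟫ : ℂ)‖ ≤ ‖T x‖ * ‖x‖ := norm_inner_le_norm _ _
    _ ≤ (‖T‖ * ‖x‖) * ‖x‖ := by
        apply mul_le_mul_of_nonneg_right (T.le_opNorm x) (norm_nonneg x)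
    _ = ‖T‖ := by rw [hx]; ring

lemma my_le_numRadius (T : H →L[ℂ] H) (x : H) (hx : ‖x‖ = 1) :
    ‖(⟪T x, x⟫ : ℂ)‖ ≤ numRadius T := by
  apply le_ciSup (f := fun x : {x : H // ‖x‖ = 1} => ‖(⟪T x.val, x.val⟫ : ℂ)‖)
    ⟨‖T‖, by rintro r ⟨y, rfl⟩; exact my_inner_le T y.val y.prop⟩ ⟨x, hx⟩

lemma my_numRadius_nonneg (T : H →L[ℂ] H) : 0 ≤ numRadius T :=
  Real.iSup_nonneg (fun x => norm_nonneg _)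

lemma my_numRadius_le_norm (T : H →L[ℂ] H) : numRadius T ≤ ‖T‖ :=
  Real.iSup_le (fun x => my_inner_le T x.val x.prop) (norm_nonneg T)


end Helpers

local notation "⟪" x ", " y "⟫" => @inner ℂ _ _ x y

set_option maxHeartbeats 1600000 in
theorem stmt_10 {H : Type*} [NormedAddCommGroup H] [InnerProductSpace ℂ H] [CompleteSpace H]
    (A B X : H →L[ℂ] H) (hA : IsSelfAdjoint A) (hB : IsSelfAdjoint B)
    (m : ℝ) (hm : 0 < m)
    (hX : (X - (m : ℂ) • (1 : H →L[ℂ] H)).IsPositive) :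
    m * ‖A - B‖ ≤ numRadius (A * X - X * B) ∧ numRadius (A * X - X * B) ≤ ‖A * X - X * B‖ := by
  refine ⟨?_, my_numRadius_le_norm _⟩
  set D := A - B with hDdef
  set T := A * X - X * B with hTdef
  set w := numRadius T with hwdef
  have hD : IsSelfAdjoint D := hA.sub hB
  have hw0 : 0 ≤ w := my_numRadius_nonneg T
  -- X is self-adjoint
  have hXsa : IsSelfAdjoint X := by
    have h1 : IsSelfAdjoint ((m : ℂ) • (1 : H →L[ℂ] H)) :=
      IsSelfAdjoint.smul (by exact Complex.conj_ofReal m) (IsSelfAdjoint.one (H →L[ℂ] H))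
    have h2 := hX.isSelfAdjoint.add h1
    simpa using h2
  -- lower bound for X on unit vectors
  have hXm : ∀ x : H, ‖x‖ = 1 → m ≤ (⟪X x, x⟫).re := by
    intro x hx
    have h0 := hX.2 x
    rw [ContinuousLinearMap.reApplyInnerSelf_apply] at h0
    have he : ((X - (m : ℂ) • (1 : H →L[ℂ] H)) x) = X x - (m : ℂ) • x := by simp
    have hxx : (⟪x, x⟫ : ℂ) = 1 := by
      rw [@inner_self_eq_norm_sq_to_K ℂ H _ _ _ x, hx]
      norm_num
    rw [he, inner_sub_left, inner_smul_left, hxx] at h0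
    simp only [RCLike.re_to_complex, Complex.sub_re, Complex.conj_ofReal, mul_one,
      Complex.ofReal_re] at h0
    linarith
  -- main estimate
  refine le_of_forall_pos_le_add (fun δ hδ => ?_)
  rcases eq_or_ne D 0 with hD0 | hD0
  · rw [hD0]; simp; positivity
  · set ε : ℝ := min (δ / (2 * m)) (δ ^ 2 / (8 * (‖X‖ + 1) ^ 2 * (‖D‖ + 1))) with hεdef
    have hXpos : (0:ℝ) < ‖X‖ + 1 := by positivity
    have hDpos : (0:ℝ) < ‖D‖ + 1 := by positivity
    have hε : 0 < ε := lt_min (by positivity) (by positivity)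
    obtain ⟨x, hx1, hx2⟩ := my_exists_unit hD hD0 hε
    set l : ℝ := (⟪D x, x⟫).re with hldef
    have hDx : ‖D x‖ ≤ ‖D‖ := by
      simpa [hx1] using D.le_opNorm x
    have hl2 : |l| ≤ ‖D‖ := by
      calc |l| ≤ ‖(⟪D x, x⟫ : ℂ)‖ := Complex.abs_re_le_norm _
        _ ≤ ‖D‖ := my_inner_le D x hx1
    set r : H := D x - (l : ℂ) • x with hrdef
    have hr2 : ‖r‖ ^ 2 = ‖D x‖ ^ 2 - l ^ 2 := by
      have := @norm_sub_sq ℂ H _ _ _ (D x) ((l : ℂ) • x)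
      simp only [RCLike.re_to_complex] at this
      rw [hrdef, this, inner_smul_right, Complex.re_ofReal_mul, norm_smul, ← hldef]
      simp [hx1]
      ring
    have hrle : ‖r‖ ^ 2 ≤ 2 * ε * ‖D‖ := by
      nlinarith [norm_nonneg (D x), abs_nonneg l, sq_abs l, le_abs_self l, neg_abs_le l]
    have hrn : ‖r‖ ≤ Real.sqrt (2 * ε * ‖D‖) := by
      calc ‖r‖ = Real.sqrt (‖r‖ ^ 2) := by rw [Real.sqrt_sq (norm_nonneg r)]
        _ ≤ Real.sqrt (2 * ε * ‖D‖) := Real.sqrt_le_sqrt hrle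
    -- key identity
    have hkey : (⟪T x, x⟫).re = l * (⟪X x, x⟫).re + (⟪X x, r⟫).re := by
      have hTx : T x = A (X x) - X (B x) := by
        rw [hTdef]; simp [ContinuousLinearMap.mul_apply]
      have e1 : (⟪T x, x⟫ : ℂ) = ⟪X x, A x⟫ - ⟪B x, X x⟫ := by
        rw [hTx, inner_sub_left, my_sym hA (X x) x, my_sym hXsa (B x) x]
      have e2 : (⟪B x, X x⟫).re = (⟪X x, B x⟫).re := by
        rw [← inner_conj_symm (X x)]; exact Complex.conj_re _
      have e3 : (⟪X x, D x⟫ : ℂ) = ⟪X x, (l : ℂ) • x⟫ + ⟪X x, r⟫ := by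
        rw [hrdef, inner_sub_right]; ring
      have e4 : (⟪X x, A x⟫ : ℂ) - ⟪X x, B x⟫ = ⟪X x, D x⟫ := by
        rw [hDdef, ← inner_sub_right]; simp [inner_sub_right]
      calc (⟪T x, x⟫).re = (⟪X x, A x⟫).re - (⟪B x, X x⟫).re := by
            rw [e1, Complex.sub_re]
        _ = (⟪X x, D x⟫).re := by rw [e2, ← e4, Complex.sub_re]
        _ = l * (⟪X x, x⟫).re + (⟪X x, r⟫).re := by
            rw [e3, Complex.add_re, inner_smul_right, Complex.re_ofReal_mul]
    -- the bound m|l| ≤ w + ‖X‖‖r‖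
    have hXx : m ≤ (⟪X x, x⟫).re := hXm x hx1
    have hT1 : |(⟪T x, x⟫).re| ≤ w := by
      calc |(⟪T x, x⟫).re| ≤ ‖(⟪T x, x⟫ : ℂ)‖ := Complex.abs_re_le_norm _
        _ ≤ w := my_le_numRadius T x hx1
    have hT2 : |(⟪X x, r⟫).re| ≤ ‖X‖ * ‖r‖ := by
      calc |(⟪X x, r⟫).re| ≤ ‖(⟪X x, r⟫ : ℂ)‖ := Complex.abs_re_le_norm _
        _ ≤ ‖X x‖ * ‖r‖ := norm_inner_le_norm _ _
        _ ≤ ‖X‖ * ‖r‖ := by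
            apply mul_le_mul_of_nonneg_right _ (norm_nonneg r)
            simpa [hx1] using X.le_opNorm x
    have hml : m * |l| ≤ w + ‖X‖ * ‖r‖ := by
      have h6 : m * |l| ≤ |l| * (⟪X x, x⟫).re := by
        rcases le_or_gt (⟪X x, x⟫).re m with h | h
        · nlinarith [abs_nonneg l]
        · nlinarith [abs_nonneg l]
      have h7 : |l| * (⟪X x, x⟫).re = |l * (⟪X x, x⟫).re| := by
        rw [abs_mul, abs_of_nonneg (le_trans hm.le hXx)]
      have h8 : |l * (⟪X x, x⟫).re| ≤ |(⟪T x, x⟫).re| + |(⟪X x, r⟫).re| := by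
        have : l * (⟪X x, x⟫).re = (⟪T x, x⟫).re - (⟪X x, r⟫).re := by linarith [hkey]
        rw [this]
        exact abs_sub _ _
      linarith
    -- epsilon bounds
    have hε1 : m * ε ≤ δ / 2 := by
      have : ε ≤ δ / (2 * m) := min_le_left _ _
      calc m * ε ≤ m * (δ / (2 * m)) := mul_le_mul_of_nonneg_left this hm.le
        _ = δ / 2 := by field_simp
    have hε2 : ‖X‖ * Real.sqrt (2 * ε * ‖D‖) ≤ δ / 2 := by
      have hle : 2 * ε * ‖D‖ ≤ (δ / (2 * (‖X‖ + 1))) ^ 2 := by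
        have h9 : ε ≤ δ ^ 2 / (8 * (‖X‖ + 1) ^ 2 * (‖D‖ + 1)) := min_le_right _ _
        have h10 : 2 * ε * ‖D‖ ≤ 2 * (δ ^ 2 / (8 * (‖X‖ + 1) ^ 2 * (‖D‖ + 1))) * (‖D‖ + 1) := by
          have hq : 0 ≤ δ ^ 2 / (8 * (‖X‖ + 1) ^ 2 * (‖D‖ + 1)) := by positivity
          have h11 : ε * ‖D‖ ≤ (δ ^ 2 / (8 * (‖X‖ + 1) ^ 2 * (‖D‖ + 1))) * (‖D‖ + 1) :=
            mul_le_mul h9 (by linarith [norm_nonneg D]) (norm_nonneg D) hq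
          linarith
        calc 2 * ε * ‖D‖ ≤ 2 * (δ ^ 2 / (8 * (‖X‖ + 1) ^ 2 * (‖D‖ + 1))) * (‖D‖ + 1) := h10
          _ = δ ^ 2 / (4 * (‖X‖ + 1) ^ 2) := by field_simp; ring
          _ = (δ / (2 * (‖X‖ + 1))) ^ 2 := by field_simp; ring
      have hsq : Real.sqrt (2 * ε * ‖D‖) ≤ δ / (2 * (‖X‖ + 1)) := by
        calc Real.sqrt (2 * ε * ‖D‖) ≤ Real.sqrt ((δ / (2 * (‖X‖ + 1))) ^ 2) :=
              Real.sqrt_le_sqrt hle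
          _ = δ / (2 * (‖X‖ + 1)) := Real.sqrt_sq (by positivity)
      calc ‖X‖ * Real.sqrt (2 * ε * ‖D‖) ≤ (‖X‖ + 1) * (δ / (2 * (‖X‖ + 1))) := by
            apply mul_le_mul (by linarith) hsq (Real.sqrt_nonneg _) hXpos.le
        _ = δ / 2 := by field_simp
    -- conclude
    have hfin : m * ‖D‖ ≤ m * |l| + m * ε := by nlinarith
    calc m * ‖D‖ ≤ m * |l| + m * ε := hfin
      _ ≤ (w + ‖X‖ * ‖r‖) + m * ε := by linarith
      _ ≤ w + ‖X‖ * Real.sqrt (2 * ε * ‖D‖) + m * ε := by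
          have := mul_le_mul_of_nonneg_left hrn (norm_nonneg X)
          linarith
      _ ≤ w + δ / 2 + δ / 2 := by linarith
      _ = w + δ := by ring
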